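/- Assume that every f_k (0 ≤ k ≤ m) is convex on ℝ^n (equivalently, the upper-left n×n block of each B_k is positive semidefinite) and all relations are ≤. If ū ∈ ℝ^n is an optimal solution of QCQP(δ), then the rank-one lift X̄ = (ū,1)(ū,1)^T = [[ū ū^T, ū],[ū^T, 1]] ∈ S^{n+1}_+ is an optimal solution of SDPR(δ). -/

import Mathlib

open Matrix BigOperators

noncomputable section

/-- Trace inner product `⟨A,X⟩ = Σᵢⱼ Aᵢⱼ Xᵢⱼ`. -/
def mInner {N : ℕ} (A X : Matrix (Fin N) (Fin N) ℝ) : ℝ :=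
  ∑ i, ∑ j, A i j * X i j

/-- The quadratic function `u ↦ (u,1)ᵀ B (u,1)` on `ℝⁿ`. -/
def quadF {n : ℕ} (B : Matrix (Fin (n + 1)) (Fin (n + 1)) ℝ) (u : Fin n → ℝ) : ℝ :=
  Fin.snoc u 1 ⬝ᵥ (B *ᵥ Fin.snoc u 1)

/-- A relation on `ℝ` is standard if it is `≤`, `=`, or `≥`. -/
def IsStdRel (r : ℝ → ℝ → Prop) : Prop :=
  r = (· ≤ ·) ∨ r = (· = ·) ∨ r = (· ≥ ·)

/-- The rank-one lift `(u,1)(u,1)ᵀ` of a vector `u ∈ ℝⁿ`. -/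
def liftMat {n : ℕ} (u : Fin n → ℝ) : Matrix (Fin (n + 1)) (Fin (n + 1)) ℝ :=
  vecMulVec (Fin.snoc u 1) (Fin.snoc u 1)

section Single

variable (nn m : ℕ) (B : Fin (m + 1) → Matrix (Fin (nn + 1)) (Fin (nn + 1)) ℝ)

/-- Feasibility of `u` for QCQP(δ) (all relations `≤`). -/
def qcqpFeas (δ : Fin m → ℝ) (u : Fin nn → ℝ) : Prop :=
  ∀ k : Fin m, quadF (B k.succ) u ≤ δ k

/-- The optimal value `ζ(δ)` of QCQP(δ). -/
def qcqpVal (δ : Fin m → ℝ) : EReal :=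
  sInf {y : EReal | ∃ u : Fin nn → ℝ,
    qcqpFeas nn m B δ u ∧ y = ((quadF (B 0) u : ℝ) : EReal)}

/-- Feasibility of `X` for the Shor relaxation SDPR(δ). -/
def sdprFeas (δ : Fin m → ℝ) (X : Matrix (Fin (nn + 1)) (Fin (nn + 1)) ℝ) : Prop :=
  X.PosSemidef ∧ X (Fin.last nn) (Fin.last nn) = 1 ∧
    ∀ k : Fin m, mInner (B k.succ) X ≤ δ k

/-- The optimal value `η(δ)` of SDPR(δ). -/
def sdprVal (δ : Fin m → ℝ) : EReal :=
  sInf {y : EReal | ∃ X : Matrix (Fin (nn + 1)) (Fin (nn + 1)) ℝ,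
    sdprFeas nn m B δ X ∧ y = ((mInner (B 0) X : ℝ) : EReal)}

end Single

lemma mInner_liftMat {n : ℕ} (B : Matrix (Fin (n + 1)) (Fin (n + 1)) ℝ) (u : Fin n → ℝ) :
    mInner B (liftMat u) = quadF B u := by
  simp only [mInner, quadF, liftMat, vecMulVec_apply, dotProduct, mulVec, Finset.mul_sum]
  apply Finset.sum_congr rfl; intro i _
  apply Finset.sum_congr rfl; intro j _
  ring

lemma mInner_nonneg {N : ℕ} {A M : Matrix (Fin N) (Fin N) ℝ}
    (hA : A.PosSemidef) (hM : M.PosSemidef) : 0 ≤ mInner A M := by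
  obtain ⟨C, rfl⟩ : ∃ C : Matrix (Fin N) (Fin N) ℝ, A = Cᴴ * C := by
    open scoped MatrixOrder Matrix.Norms.L2Operator in
    obtain ⟨C, hC⟩ := CStarAlgebra.nonneg_iff_eq_star_mul_self.mp hA.nonneg
    exact ⟨C, hC⟩
  have key : mInner (Cᴴ * C) M = ∑ k, (fun j => C k j) ⬝ᵥ (M *ᵥ fun j => C k j) := by
    simp only [mInner, mul_apply, conjTranspose_apply, star_trivial, dotProduct, mulVec,
      Finset.sum_mul, Finset.mul_sum]
    conv_lhs => rw [Finset.sum_congr rfl (fun j _ => Finset.sum_comm ..)]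
    rw [Finset.sum_comm]
    apply Finset.sum_congr rfl; intro i _
    apply Finset.sum_congr rfl; intro j _
    apply Finset.sum_congr rfl; intro k _
    ring
  rw [key]
  exact Finset.sum_nonneg fun k _ => by simpa using hM.dotProduct_mulVec_nonneg (fun j => C k j)

lemma liftMat_posSemidef {n : ℕ} (v : Fin (n+1) → ℝ) : (vecMulVec v v).PosSemidef := by
  refine .of_dotProduct_mulVec_nonneg ?_ (fun x => ?_)
  · ext i j
    simp [vecMulVec_apply, conjTranspose_apply, mul_comm]
  · have h : (vecMulVec v v) *ᵥ x = (v ⬝ᵥ x) • v := by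
      ext a
      simp [mulVec, vecMulVec_apply, dotProduct, Finset.mul_sum, mul_assoc, mul_comm, mul_left_comm]
    rw [h]
    simp only [star_trivial, dotProduct_smul, smul_eq_mul]
    rw [dotProduct_comm]
    exact mul_self_nonneg _

lemma quadF_le_mInner {n : ℕ} (B X : Matrix (Fin (n+1)) (Fin (n+1)) ℝ)
    (hBs : B.IsSymm) (hBc : B (Fin.last n) (Fin.last n) = 0)
    (hA : (B.submatrix Fin.castSucc Fin.castSucc).PosSemidef)
    (hX : X.PosSemidef) (hX1 : X (Fin.last n) (Fin.last n) = 1) :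
    quadF B (fun i => X i.castSucc (Fin.last n)) ≤ mInner B X := by
  set u : Fin n → ℝ := fun i => X i.castSucc (Fin.last n) with hu
  have hsym : ∀ a b, X a b = X b a := by
    intro a b
    have := hX.1
    rw [Matrix.IsHermitian] at this
    conv_lhs => rw [← this]
    simp [conjTranspose_apply]
  -- congruence matrix
  set L : Matrix (Fin n) (Fin (n+1)) ℝ :=
    Matrix.of (fun i => Fin.snoc (Pi.single i (1:ℝ)) (-u i)) with hL
  have hM : (X.submatrix Fin.castSucc Fin.castSucc - vecMulVec u u) = L * X * Lᴴ := by
    ext i j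
    simp only [mul_apply, conjTranspose_apply, star_trivial, hL, Matrix.of_apply,
      Fin.sum_univ_castSucc, Fin.snoc_castSucc, Fin.snoc_last,
      Pi.single_apply, ite_mul, mul_ite, one_mul, zero_mul, mul_one, mul_zero,
      Finset.sum_ite_eq', Finset.mem_univ, if_true, Finset.sum_add_distrib,
      Finset.sum_ite_eq, add_mul, mul_add, Matrix.sub_apply, submatrix_apply, vecMulVec_apply]
    rw [hsym (Fin.last n) j.castSucc, hX1]
    ring
  have hMpsd : (X.submatrix Fin.castSucc Fin.castSucc - vecMulVec u u).PosSemidef := by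
    rw [hM]; exact hX.mul_mul_conjTranspose_same L
  have hnn := mInner_nonneg hA hMpsd
  have heq : mInner B X - quadF B u =
      mInner (B.submatrix Fin.castSucc Fin.castSucc)
        (X.submatrix Fin.castSucc Fin.castSucc - vecMulVec u u) := by
    simp only [mInner, quadF, dotProduct, mulVec, Matrix.sub_apply, submatrix_apply, vecMulVec_apply,
      Fin.sum_univ_castSucc, Fin.snoc_castSucc, Fin.snoc_last, hBc, hX1,
      mul_sub, Finset.sum_sub_distrib, Finset.mul_sum]
    simp only [show ∀ j : Fin n, X (Fin.last n) j.castSucc = u j from fun j => hsym _ _]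
    simp only [mul_add, add_mul, Finset.sum_add_distrib, Finset.mul_sum, one_mul, mul_one,
      zero_mul, mul_zero]
    rw [show (∑ x : Fin n, ∑ y : Fin n, u x * (B x.castSucc y.castSucc * u y))
          = ∑ x : Fin n, ∑ y : Fin n, B x.castSucc y.castSucc * (u x * u y) from
        Finset.sum_congr rfl fun x _ => Finset.sum_congr rfl fun y _ => by ring,
      show (∑ x : Fin n, u x * B x.castSucc (Fin.last n))
          = ∑ x : Fin n, B x.castSucc (Fin.last n) * X x.castSucc (Fin.last n) from
        Finset.sum_congr rfl fun x _ => by simp only [hu]; ring]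
    ring
  linarith

/-- **Theorem 4.1 (ii).** For a convex QCQP (all `fₖ` convex, all relations `≤`), if
`ū` is an optimal solution of QCQP(δ), then the rank-one lift
`X̄ = (ū,1)(ū,1)ᵀ` is an optimal solution of SDPR(δ). -/
theorem convex_qcqp_opt_to_sdpr_opt
    (nn m : ℕ) (hnn : 0 < nn) (hm : 0 < m)
    (B : Fin (m + 1) → Matrix (Fin (nn + 1)) (Fin (nn + 1)) ℝ)
    (hBsymm : ∀ k, (B k).IsSymm)
    (hBcorner : ∀ k, B k (Fin.last nn) (Fin.last nn) = 0)
    (hconv : ∀ k, ((B k).submatrix Fin.castSucc Fin.castSucc).PosSemidef)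
    (δ : Fin m → ℝ)
    (ub : Fin nn → ℝ)
    (hfeas : qcqpFeas nn m B δ ub)
    (hopt : ((quadF (B 0) ub : ℝ) : EReal) = qcqpVal nn m B δ) :
    sdprFeas nn m B δ (liftMat ub) ∧
    ((mInner (B 0) (liftMat ub) : ℝ) : EReal) = sdprVal nn m B δ := by
  have hpsd : (liftMat ub).PosSemidef := liftMat_posSemidef _
  have hll : liftMat ub (Fin.last nn) (Fin.last nn) = 1 := by
    simp [liftMat, vecMulVec_apply, Fin.snoc_last]
  have hfeasS : sdprFeas nn m B δ (liftMat ub) :=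
    ⟨hpsd, hll, fun k => by rw [mInner_liftMat]; exact hfeas k⟩
  refine ⟨hfeasS, le_antisymm ?_ (sInf_le ⟨liftMat ub, hfeasS, rfl⟩)⟩
  apply le_sInf
  rintro y ⟨X, hXf, rfl⟩
  rw [mInner_liftMat]
  have hq := quadF_le_mInner (B 0) X (hBsymm 0) (hBcorner 0) (hconv 0) hXf.1 hXf.2.1
  set u' : Fin nn → ℝ := fun i => X i.castSucc (Fin.last nn) with hu'
  have hu'feas : qcqpFeas nn m B δ u' := fun k =>
    le_trans (quadF_le_mInner (B k.succ) X (hBsymm _) (hBcorner _) (hconv _) hXf.1 hXf.2.1)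
      (hXf.2.2 k)
  calc ((quadF (B 0) ub : ℝ) : EReal) = qcqpVal nn m B δ := hopt
    _ ≤ ((quadF (B 0) u' : ℝ) : EReal) := sInf_le ⟨u', hu'feas, rfl⟩
    _ ≤ ((mInner (B 0) X : ℝ) : EReal) := by exact_mod_cast hq
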